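/- Let M be a symmetric positive definite n×n real matrix, and let D and Θ be n×n diagonal matrices with strictly positive diagonal entries. Then for every nonzero real vector w, the quotient (wᵀ (D + Θ)⁻¹ w) / (wᵀ (M + Θ)⁻¹ w) is well defined (both quadratic forms are positive) and satisfies (wᵀ (D + Θ)⁻¹ w) / (wᵀ (M + Θ)⁻¹ w) ≥ min{λmin(D⁻¹M), 1}. -/

import Mathlib

open Matrix

/-- The set of Rayleigh quotients `(vᵀ P v)/(vᵀ Q v)` over nonzero real vectors `v`.
For `P = M` symmetric positive definite and `Q = D` diagonal positive definite,
`sInf` of this set is `λmin(D⁻¹M)`. -/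
def rayleighSet {n : ℕ} (P Q : Matrix (Fin n) (Fin n) ℝ) : Set ℝ :=
  {r | ∃ v : Fin n → ℝ, v ≠ 0 ∧ r = (v ⬝ᵥ (P *ᵥ v)) / (v ⬝ᵥ (Q *ᵥ v))}

private lemma pd_pos {n : ℕ} {A : Matrix (Fin n) (Fin n) ℝ} (hA : A.PosDef)
    {x : Fin n → ℝ} (hx : x ≠ 0) : 0 < x ⬝ᵥ (A *ᵥ x) := by
  simpa using hA.dotProduct_mulVec_pos hx

private lemma psd_nonneg {n : ℕ} {A : Matrix (Fin n) (Fin n) ℝ} (hA : A.PosSemidef)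
    (x : Fin n → ℝ) : 0 ≤ x ⬝ᵥ (A *ᵥ x) := by
  simpa using hA.dotProduct_mulVec_nonneg x

private lemma herm_sym {n : ℕ} {A : Matrix (Fin n) (Fin n) ℝ} (hA : A.IsHermitian)
    (x y : Fin n → ℝ) : x ⬝ᵥ (A *ᵥ y) = y ⬝ᵥ (A *ᵥ x) := by
  have hAT : Aᵀ = A := by
    have := hA.eq
    exact (isHermitian_iff_isSymm.mp hA).eq
  rw [dotProduct_mulVec, ← mulVec_transpose, hAT, dotProduct_comm]

theorem inverse_quadratic_form_quotient_bound {n : ℕ}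
    (M : Matrix (Fin n) (Fin n) ℝ) (hM : M.PosDef)
    (d θ : Fin n → ℝ) (hd : ∀ i, 0 < d i) (hθ : ∀ i, 0 < θ i)
    (w : Fin n → ℝ) (hw : w ≠ 0) :
    0 < w ⬝ᵥ ((Matrix.diagonal d + Matrix.diagonal θ)⁻¹ *ᵥ w) ∧
    0 < w ⬝ᵥ ((M + Matrix.diagonal θ)⁻¹ *ᵥ w) ∧
    min (sInf (rayleighSet M (Matrix.diagonal d))) 1 ≤
      (w ⬝ᵥ ((Matrix.diagonal d + Matrix.diagonal θ)⁻¹ *ᵥ w)) /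
        (w ⬝ᵥ ((M + Matrix.diagonal θ)⁻¹ *ᵥ w)) := by
  set L := min (sInf (rayleighSet M (Matrix.diagonal d))) 1 with hL
  set A := M + Matrix.diagonal θ with hAdef
  set B := Matrix.diagonal d + Matrix.diagonal θ with hBdef
  have hθpd : (Matrix.diagonal θ).PosDef := .diagonal hθ
  have hA : A.PosDef := hM.add_posSemidef hθpd.posSemidef
  have hB : B.PosDef := by
    rw [hBdef, diagonal_add]
    exact .diagonal fun i => add_pos (hd i) (hθ i)
  have hBpos : 0 < w ⬝ᵥ (B⁻¹ *ᵥ w) := pd_pos hB.inv hw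
  have hApos : 0 < w ⬝ᵥ (A⁻¹ *ᵥ w) := pd_pos hA.inv hw
  refine ⟨hBpos, hApos, ?_⟩
  -- key inequality: L * vᵀBv ≤ vᵀAv for all v
  have key : ∀ v : Fin n → ℝ, L * (v ⬝ᵥ (B *ᵥ v)) ≤ v ⬝ᵥ (A *ᵥ v) := by
    intro v
    rcases eq_or_ne v 0 with rfl | hv
    · simp
    · have hDv : 0 < v ⬝ᵥ (Matrix.diagonal d *ᵥ v) := pd_pos (.diagonal hd) hv
      have hbdd : BddBelow (rayleighSet M (Matrix.diagonal d)) := by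
        refine ⟨0, fun r hr => ?_⟩
        obtain ⟨v', hv', rfl⟩ := hr
        exact (div_pos (pd_pos hM hv') (pd_pos (.diagonal hd) hv')).le
      have hmem : (v ⬝ᵥ (M *ᵥ v)) / (v ⬝ᵥ (Matrix.diagonal d *ᵥ v)) ∈
          rayleighSet M (Matrix.diagonal d) := ⟨v, hv, rfl⟩
      have h1 : L * (v ⬝ᵥ (Matrix.diagonal d *ᵥ v)) ≤ v ⬝ᵥ (M *ᵥ v) := by
        have := (min_le_left _ (1:ℝ)).trans (csInf_le hbdd hmem)
        calc L * (v ⬝ᵥ (Matrix.diagonal d *ᵥ v))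
            ≤ ((v ⬝ᵥ (M *ᵥ v)) / (v ⬝ᵥ (Matrix.diagonal d *ᵥ v))) *
              (v ⬝ᵥ (Matrix.diagonal d *ᵥ v)) :=
              mul_le_mul_of_nonneg_right this hDv.le
          _ = v ⬝ᵥ (M *ᵥ v) := div_mul_cancel₀ _ hDv.ne'
      have h2 : L * (v ⬝ᵥ (Matrix.diagonal θ *ᵥ v)) ≤ v ⬝ᵥ (Matrix.diagonal θ *ᵥ v) :=
        mul_le_of_le_one_left (psd_nonneg hθpd.posSemidef v) (min_le_right _ _)
      have expand : ∀ (C : Matrix (Fin n) (Fin n) ℝ),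
          v ⬝ᵥ ((C + Matrix.diagonal θ) *ᵥ v)
            = v ⬝ᵥ (C *ᵥ v) + v ⬝ᵥ (Matrix.diagonal θ *ᵥ v) := fun C => by
        rw [add_mulVec, dotProduct_add]
      rw [hAdef, hBdef, expand, expand, mul_add]
      exact add_le_add h1 h2
  rcases le_or_gt L 0 with hL0 | hL0
  · exact hL0.trans (div_pos hBpos hApos).le
  · -- u = A⁻¹ w
    set u := A⁻¹ *ᵥ w with hu
    have hAu : A *ᵥ u = w := by
      rw [hu, mulVec_mulVec, Matrix.mul_nonsing_inv _ hA.det_pos.ne'.isUnit, one_mulVec]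
    have hu0 : u ≠ 0 := by
      intro h; apply hw; rw [← hAu, h, mulVec_zero]
    set a := u ⬝ᵥ (A *ᵥ u) with ha
    have ha0 : 0 < a := pd_pos hA hu0
    have hwa : w ⬝ᵥ (A⁻¹ *ᵥ w) = a := by
      rw [← hu, ha, hAu, dotProduct_comm]
    -- z = B⁻¹ w
    set z := B⁻¹ *ᵥ w with hz
    have hBz : B *ᵥ z = w := by
      rw [hz, mulVec_mulVec, Matrix.mul_nonsing_inv _ hB.det_pos.ne'.isUnit, one_mulVec]
    set b := w ⬝ᵥ (B⁻¹ *ᵥ w) with hb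
    have hb0 : 0 < b := hBpos
    have hzb : z ⬝ᵥ (B *ᵥ z) = b := by rw [hBz, hb, hz, dotProduct_comm]
    have huw : u ⬝ᵥ w = a := by rw [← hAu, ha]
    have huBz : u ⬝ᵥ (B *ᵥ z) = a := by rw [hBz, huw]
    have hzBu : z ⬝ᵥ (B *ᵥ u) = a := by rw [herm_sym hB.isHermitian, huBz]
    -- Cauchy–Schwarz step: 0 ≤ (u - t z)ᵀ B (u - t z) with t = a / b
    set t := a / b with ht
    have hcs : 0 ≤ (u - t • z) ⬝ᵥ (B *ᵥ (u - t • z)) := psd_nonneg hB.posSemidef _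
    have hexp : (u - t • z) ⬝ᵥ (B *ᵥ (u - t • z))
        = u ⬝ᵥ (B *ᵥ u) - 2 * t * a + t ^ 2 * b := by
      simp only [mulVec_sub, mulVec_smul, dotProduct_sub, sub_dotProduct,
        dotProduct_smul, smul_dotProduct, smul_eq_mul, huBz, hzBu, hzb]
      ring
    have hquad : a ^ 2 / b ≤ u ⬝ᵥ (B *ᵥ u) := by
      rw [hexp] at hcs
      have : 2 * t * a - t ^ 2 * b = a ^ 2 / b := by
        rw [ht]; field_simp; ring
      nlinarith [hcs]
    have hkeyu := key u
    have hLb : L * a ≤ b := by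
      have h3 : L * (a ^ 2 / b) ≤ a := le_trans (mul_le_mul_of_nonneg_left hquad hL0.le) hkeyu
      have h3' : L * a ^ 2 / b ≤ a := by rw [mul_div_assoc]; exact h3
      have h4 : L * a ^ 2 ≤ a * b := (div_le_iff₀ hb0).mp h3'
      nlinarith [ha0, h4]
    rw [hwa]
    rw [le_div_iff₀ ha0]
    linarith [hLb]
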